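/- Let w be a permutation of {1,…,n}. Then for every 1 ≤ i ≤ n one has r_i(w) ≥ m_i(w); consequently raj(w) ≥ maj(w). -/

import Mathlib

open scoped Classical

noncomputable section

namespace RajRegularity

variable {n : ℕ}

/-- Maximal length of an increasing subsequence of `w(i), …, w(n)` beginning with `w(i)`:
the largest cardinality of a set `s` of positions that contains `i`, consists of positions
`≥ i`, and on which `w` is strictly increasing. -/
def lisFrom (w : Equiv.Perm (Fin n)) (i : Fin n) : ℕ :=
  (Finset.univ.filter fun s : Finset (Fin n) =>
      i ∈ s ∧ (∀ j ∈ s, i ≤ j) ∧ ∀ j ∈ s, ∀ k ∈ s, j < k → w j < w k).sup Finset.card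

/-- `rajCode w i = (n − i + 1) −` (maximal length of an increasing subsequence of
`w(i), …, w(n)` beginning with `w(i)`); here positions are 0-based, so the number of
positions `≥ i` is `n - i`. -/
def rajCode (w : Equiv.Perm (Fin n)) (i : Fin n) : ℕ :=
  (n - (i : ℕ)) - lisFrom w i

/-- The Rajchgot index `raj w = Σᵢ rajCode w i`. -/
def raj (w : Equiv.Perm (Fin n)) : ℕ := ∑ i, rajCode w i

/-- The number of inversions of `w`: pairs of positions `i < j` with `w i > w j`. -/
def invNum (w : Equiv.Perm (Fin n)) : ℕ :=
  (Finset.univ.filter fun p : Fin n × Fin n => p.1 < p.2 ∧ w p.2 < w p.1).card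

/-- The `i`-th entry of the inv code: `ℓ_i(w) = #{ j : i < j, w j < w i }`. -/
def ellCode (w : Equiv.Perm (Fin n)) (i : Fin n) : ℕ :=
  (Finset.univ.filter fun j : Fin n => i < j ∧ w j < w i).card

/-- The set of descent positions of `w` (0-based position `j` with `w j > w (j+1)`). -/
def descents (w : Equiv.Perm (Fin n)) : Finset (Fin n) :=
  Finset.univ.filter fun j : Fin n =>
    if h : (j : ℕ) + 1 < n then w ⟨(j : ℕ) + 1, h⟩ < w j else False

/-- The major index: the sum of the (1-based) descent positions of `w`. -/
def maj (w : Equiv.Perm (Fin n)) : ℕ := ∑ j ∈ descents w, ((j : ℕ) + 1)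

/-- `mCode w i`: the number of descents of `w` at positions `≥ i`. -/
def mCode (w : Equiv.Perm (Fin n)) (i : Fin n) : ℕ :=
  ((descents w).filter fun j => i ≤ j).card

/-- `w` is dominant iff it avoids the pattern 132. -/
def Dominant (w : Equiv.Perm (Fin n)) : Prop :=
  ¬ ∃ i j k : Fin n, i < j ∧ j < k ∧ w i < w k ∧ w k < w j

/-- `w` is fireworks iff there are no positions `i < j` with `w j < w (j+1) < w i`. -/
def Fireworks (w : Equiv.Perm (Fin n)) : Prop :=
  ¬ ∃ (i j : Fin n) (h : (j : ℕ) + 1 < n),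
      i < j ∧ w j < w ⟨(j : ℕ) + 1, h⟩ ∧ w ⟨(j : ℕ) + 1, h⟩ < w i

/-- `w` is inverse fireworks iff `w⁻¹` is fireworks. -/
def InvFireworks (w : Equiv.Perm (Fin n)) : Prop := Fireworks w⁻¹

/-- `w` is a valley permutation: for some `a`, it is strictly decreasing on positions `≤ a`
and strictly increasing on positions `≥ a`. -/
def Valley (w : Equiv.Perm (Fin n)) : Prop :=
  ∃ a : ℕ, (∀ i j : Fin n, i < j → (j : ℕ) ≤ a → w j < w i) ∧
    ∀ i j : Fin n, a ≤ (i : ℕ) → i < j → w i < w j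

/-- `eps w i` is the (1-based) blob index `ε_i(w) = i + r_i(w)`. -/
def eps (w : Equiv.Perm (Fin n)) (i : Fin n) : ℕ := (i : ℕ) + 1 + rajCode w i

/-- The shape of `w`: `α_k(w) = #{ i : ε_i(w) = k }` (here `k : Fin n` stands for the
1-based index `k + 1`). -/
def shape (w : Equiv.Perm (Fin n)) : Fin n → ℕ := fun k =>
  (Finset.univ.filter fun i : Fin n => eps w i = (k : ℕ) + 1).card

/-- Dominance order on shapes: `α ⪰ β` iff every tail sum of `α` is at least the
corresponding tail sum of `β`. -/
def Dominates (α β : Fin n → ℕ) : Prop :=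
  ∀ m : Fin n,
    ∑ k ∈ Finset.univ.filter (fun k : Fin n => m ≤ k), β k ≤
      ∑ k ∈ Finset.univ.filter (fun k : Fin n => m ≤ k), α k

/-- Right weak order: `u ≤_R w` iff `w = u * v` length-additively. -/
def leR (u w : Equiv.Perm (Fin n)) : Prop :=
  ∃ v : Equiv.Perm (Fin n), w = u * v ∧ invNum w = invNum u + invNum v

/-- Left weak order: `u ≤_L w` iff `w = v * u` length-additively. -/
def leL (u w : Equiv.Perm (Fin n)) : Prop :=
  ∃ v : Equiv.Perm (Fin n), w = v * u ∧ invNum w = invNum v + invNum u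

/-- Two-sided weak order: the transitive closure of the union of left and right weak
orders (both are reflexive, so we may use the reflexive-transitive closure). -/
def leLR (u w : Equiv.Perm (Fin n)) : Prop :=
  Relation.ReflTransGen (fun a b : Equiv.Perm (Fin n) => leL a b ∨ leR a b) u w

/-- The maximum of the block of the set partition `π(w)` containing the value `v`;
the block of `v` is `{ v' : ε_{w⁻¹ v'}(w) = ε_{w⁻¹ v}(w) }`. -/
def blockMax (w : Equiv.Perm (Fin n)) (v : Fin n) : ℕ :=
  ((Finset.univ.filter fun v' : Fin n => eps w (w⁻¹ v') = eps w (w⁻¹ v)).max'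
      ⟨v, Finset.mem_filter.mpr ⟨Finset.mem_univ v, rfl⟩⟩).val

/-- The fireworks map `Φ`: the one-line word of `Φ w` lists the blocks of `π(w)` in
increasing order of their maxima, each block written in decreasing order.  Equivalently,
`Φ w` sorts the values by the key (max of block, value reversed), lexicographically. -/
def Phi (w : Equiv.Perm (Fin n)) : Equiv.Perm (Fin n) :=
  Tuple.sort fun v : Fin n => n * blockMax w v + (n - 1 - (v : ℕ))

/-- The inverse fireworks map `Φ_inv w = Φ(w⁻¹)⁻¹`. -/
def PhiInv (w : Equiv.Perm (Fin n)) : Equiv.Perm (Fin n) := (Phi w⁻¹)⁻¹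

/-- Partial sums of a sequence of block sizes. -/
def psum (a : ℕ → ℕ) (m : ℕ) : ℕ := ∑ j ∈ Finset.range m, a j

/-- The index of the block (interval `[psum a m, psum a (m+1))`) containing the value `v`. -/
def blockIdx (n : ℕ) (a : ℕ → ℕ) (v : Fin n) : ℕ :=
  ((Finset.range n).filter fun m => psum a (m + 1) ≤ (v : ℕ)).card

/-- The layered permutation with block sizes `a 0, a 1, …`: it reverses each of the
consecutive intervals `[psum a m, psum a (m+1))` of `{0, …, n-1}`.  Equivalently, its
one-line word sorts the values by (block index, value reversed) lexicographically. -/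
def layered (n : ℕ) (a : ℕ → ℕ) : Equiv.Perm (Fin n) :=
  Tuple.sort fun v : Fin n => n * blockIdx n a v + (n - 1 - (v : ℕ))

/-- The layered permutation `e_α` associated to a shape `α : Fin n → ℕ`. -/
def eOf (α : Fin n → ℕ) : Equiv.Perm (Fin n) :=
  layered n fun m => if h : m < n then α ⟨m, h⟩ else 0

lemma exists_ascent (w : Equiv.Perm (Fin n)) :
    ∀ (N : ℕ) (b a : Fin n), (b : ℕ) ≤ N → a < b → w a < w b →
      ∃ j : Fin n, a ≤ j ∧ (j : ℕ) + 1 ≤ (b : ℕ) ∧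
        ∃ h : (j : ℕ) + 1 < n, w j < w ⟨(j : ℕ) + 1, h⟩ := by
  intro N
  induction N with
  | zero => intro b a hN hab _; exact absurd hab (by omega)
  | succ N ih =>
    intro b a hN hab hw
    have hab' : (a : ℕ) < (b : ℕ) := hab
    have hbn : (b : ℕ) < n := b.isLt
    set c : Fin n := ⟨(b : ℕ) - 1, by omega⟩ with hc
    have hcv : (c : ℕ) = (b : ℕ) - 1 := rfl
    by_cases hac : a = c
    · have hav : (a : ℕ) = (c : ℕ) := by rw [hac]
      refine ⟨a, le_refl a, by omega, by omega, ?_⟩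
      have heq : (⟨(a : ℕ) + 1, by omega⟩ : Fin n) = b := by
        simp only [Fin.ext_iff, Fin.val_mk]; omega
      rw [heq]; exact hw
    · have hacl : a < c := by
        have h1 : (a : ℕ) ≤ (c : ℕ) := by omega
        have h2 : (a : ℕ) ≠ (c : ℕ) := fun h => hac (Fin.ext h)
        exact Fin.lt_def.mpr (lt_of_le_of_ne h1 h2)
      by_cases hwc : w a < w c
      · obtain ⟨j, h1, h2, h3⟩ := ih c a (by omega) hacl hwc
        exact ⟨j, h1, by omega, h3⟩
      · refine ⟨c, le_of_lt hacl, by omega, by omega, ?_⟩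
        have heq : (⟨(c : ℕ) + 1, by omega⟩ : Fin n) = b := by
          simp only [Fin.ext_iff, Fin.val_mk]; omega
        rw [heq]
        exact lt_of_le_of_lt (not_lt.mp hwc) hw

lemma key_count (w : Equiv.Perm (Fin n)) (i : Fin n) (s : Finset (Fin n))
    (hi : i ∈ s) (hge : ∀ j ∈ s, i ≤ j)
    (hinc : ∀ j ∈ s, ∀ k ∈ s, j < k → w j < w k) :
    s.card + mCode w i ≤ n - (i : ℕ) := by
  classical
  set Asc : Finset (Fin n) := Finset.univ.filter
    (fun j : Fin n => i ≤ j ∧ ∃ h : (j : ℕ) + 1 < n, w j < w ⟨(j : ℕ) + 1, h⟩) with hAsc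
  set D : Finset (Fin n) := (descents w).filter (fun j => i ≤ j) with hD
  -- step 1 : s.card ≤ Asc.card + 1
  have hne : s.Nonempty := ⟨i, hi⟩
  set M := s.max' hne with hM
  have hchoice : ∀ x ∈ s.erase M, ∃ j : Fin n, x ≤ j ∧
      (∀ y ∈ s, x < y → (j : ℕ) < (y : ℕ)) ∧
      ∃ h : (j : ℕ) + 1 < n, w j < w ⟨(j : ℕ) + 1, h⟩ := by
    intro x hx
    have hxs : x ∈ s := Finset.mem_of_mem_erase hx
    have hxM : x ≠ M := Finset.ne_of_mem_erase hx
    have hxltM : x < M := lt_of_le_of_ne (Finset.le_max' s x hxs) hxM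
    have hMs : M ∈ s := s.max'_mem hne
    set T : Finset (Fin n) := s.filter (fun y => x < y) with hT
    have hTne : T.Nonempty := ⟨M, Finset.mem_filter.mpr ⟨hMs, hxltM⟩⟩
    set t := T.min' hTne with ht
    have hts : t ∈ s := (Finset.mem_filter.mp (T.min'_mem hTne)).1
    have hxt : x < t := (Finset.mem_filter.mp (T.min'_mem hTne)).2
    have hwxt : w x < w t := hinc x hxs t hts hxt
    obtain ⟨j, h1, h2, h3⟩ := exists_ascent w (t : ℕ) t x (le_refl _) hxt hwxt
    refine ⟨j, h1, ?_, h3⟩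
    intro y hy hxy
    have hty : t ≤ y := Finset.min'_le T y (Finset.mem_filter.mpr ⟨hy, hxy⟩)
    have : (t : ℕ) ≤ (y : ℕ) := hty
    omega
  have step1 : s.card ≤ Asc.card + 1 := by
    have hcard : (s.erase M).card ≤ Asc.card := by
      apply Finset.card_le_card_of_injOn
        (fun x => if hx : x ∈ s.erase M then (hchoice x hx).choose else x)
      · intro x hx
        simp only [dif_pos (show x ∈ s.erase M from hx)]
        obtain ⟨h1, h2, h3⟩ := (hchoice x hx).choose_spec
        have hxs : x ∈ s := Finset.mem_of_mem_erase hx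
        exact Finset.mem_filter.mpr ⟨Finset.mem_univ _, le_trans (hge x hxs) h1, h3⟩
      · intro x hx y hy hxy
        have hx' : x ∈ s.erase M := hx
        have hy' : y ∈ s.erase M := hy
        simp only [dif_pos hx', dif_pos hy'] at hxy
        by_contra hne'
        obtain ⟨hx1, hx2, _⟩ := (hchoice x hx').choose_spec
        obtain ⟨hy1, hy2, _⟩ := (hchoice y hy').choose_spec
        have hxs : x ∈ s := Finset.mem_of_mem_erase hx'
        have hys : y ∈ s := Finset.mem_of_mem_erase hy'
        rcases lt_or_gt_of_ne hne' with h | h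
        · have h2 := hx2 y hys h
          have h1' : (y : ℕ) ≤ ((hchoice y hy').choose : ℕ) := hy1
          rw [hxy] at h2
          omega
        · have h2 := hy2 x hxs h
          have h1' : (x : ℕ) ≤ ((hchoice x hx').choose : ℕ) := hx1
          rw [← hxy] at h2
          omega
    have := Finset.card_erase_of_mem (show M ∈ s from s.max'_mem hne)
    omega
  -- step 2 : Asc and D are disjoint
  have hdisj : Disjoint Asc D := by
    rw [Finset.disjoint_left]
    intro j hj hjD
    obtain ⟨-, -, hjh, hasc⟩ := Finset.mem_filter.mp hj
    obtain ⟨hjd, -⟩ := Finset.mem_filter.mp hjD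
    rw [descents, Finset.mem_filter] at hjd
    have P := hjd.2
    rw [dif_pos hjh] at P
    exact absurd hasc (not_lt.mpr (le_of_lt P))
  have hcard2 : Asc.card + D.card ≤ n - 1 - (i : ℕ) := by
    rw [← Finset.card_union_of_disjoint hdisj]
    have hle : (Asc ∪ D).card ≤ (Finset.Ico (i : ℕ) (n - 1)).card := by
      apply Finset.card_le_card_of_injOn (fun j : Fin n => (j : ℕ))
      · intro j hj
        have hcond : i ≤ j ∧ (j : ℕ) + 1 < n := by
          rcases Finset.mem_union.mp hj with h | h
          · obtain ⟨-, h1, h2, -⟩ := Finset.mem_filter.mp h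
            exact ⟨h1, h2⟩
          · obtain ⟨h1, h2⟩ := Finset.mem_filter.mp h
            rw [descents, Finset.mem_filter] at h1
            have P := h1.2
            by_cases hc : (j : ℕ) + 1 < n
            · exact ⟨h2, hc⟩
            · rw [dif_neg hc] at P; exact absurd P (by simp)
        have hij : (i : ℕ) ≤ (j : ℕ) := hcond.1
        exact Finset.mem_Ico.mpr ⟨hij, by show (j : ℕ) < n - 1; omega⟩
      · intro a _ b _ hab; exact Fin.ext hab
    simpa [Nat.card_Ico] using hle
  have hin : (i : ℕ) < n := i.isLt
  have hm : mCode w i = D.card := rfl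
  omega

/-- For every position `i`, `r_i(w) ≥ m_i(w)`; consequently `raj(w) ≥ maj(w)`. -/
theorem mCode_le_rajCode_and_maj_le_raj (n : ℕ) (w : Equiv.Perm (Fin n)) :
    (∀ i : Fin n, mCode w i ≤ rajCode w i) ∧ maj w ≤ raj w := by
  classical
  have main : ∀ i : Fin n, mCode w i ≤ rajCode w i := by
    intro i
    set F : Finset (Finset (Fin n)) := Finset.univ.filter fun s : Finset (Fin n) =>
      i ∈ s ∧ (∀ j ∈ s, i ≤ j) ∧ ∀ j ∈ s, ∀ k ∈ s, j < k → w j < w k with hF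
    have hFne : F.Nonempty := by
      refine ⟨{i}, Finset.mem_filter.mpr ⟨Finset.mem_univ _, ?_, ?_, ?_⟩⟩
      · exact Finset.mem_singleton_self i
      · intro j hj; rw [Finset.mem_singleton.mp hj]
      · intro j hj k hk hjk
        rw [Finset.mem_singleton.mp hj, Finset.mem_singleton.mp hk] at hjk
        exact absurd hjk (lt_irrefl _)
    obtain ⟨s, hsF, hsup⟩ := Finset.exists_mem_eq_sup F hFne Finset.card
    obtain ⟨-, hi, hge, hinc⟩ := Finset.mem_filter.mp hsF
    have hkey := key_count w i s hi hge hinc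
    have hlis : lisFrom w i = s.card := hsup
    have hraj : rajCode w i = (n - (i : ℕ)) - s.card := by
      rw [rajCode, hlis]
    omega
  refine ⟨main, ?_⟩
  have hsum : maj w = ∑ i : Fin n, mCode w i := by
    have h1 : ∀ i : Fin n, mCode w i =
        ∑ j ∈ descents w, if i ≤ j then 1 else 0 := by
      intro i
      rw [mCode, Finset.card_filter]
    simp only [h1]
    rw [Finset.sum_comm]
    rw [maj]
    apply Finset.sum_congr rfl
    intro j _
    have h2 : (∑ i : Fin n, if i ≤ j then 1 else 0)
        = (Finset.univ.filter fun i : Fin n => i ≤ j).card := by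
      rw [Finset.card_filter]
    rw [h2]
    have h3 : (Finset.univ.filter fun i : Fin n => i ≤ j) = Finset.Iic j := by
      ext x; simp
    rw [h3, Fin.card_Iic]
  rw [hsum, raj]
  exact Finset.sum_le_sum fun i _ => main i

end RajRegularity
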